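/- arXiv:0902.1256 — 3 statements merged into one kernel-verified Lean document; each statement's English description precedes it below -/
import Mathlib

section
/- A relational structure 𝔸 is homomorphically equivalent to a structure of tree width at most w if and only if the core of 𝔸 has tree width at most w. -/
/-- A relational structure over a vocabulary `σ` (with arity function `ar`)
on a carrier type `V`: a (finite) universe together with a relation for each
symbol, all of whose tuples take values in the universe. -/
structure Strc (σ : Type) (ar : σ → ℕ) (V : Type) where
  univ : Set V
  rel : ∀ R : σ, Set (Fin (ar R) → V)
  mem_univ : ∀ R, ∀ t ∈ rel R, ∀ i, t i ∈ univ

/-- `f` is a homomorphism from `A` to `B`: it maps the universe into the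
universe and every tuple of every relation to a tuple of the corresponding
relation. -/
def IsHom {σ : Type} {ar : σ → ℕ} {V W : Type}
    (A : Strc σ ar V) (B : Strc σ ar W) (f : V → W) : Prop :=
  Set.MapsTo f A.univ B.univ ∧ ∀ R, ∀ t ∈ A.rel R, (fun i => f (t i)) ∈ B.rel R

/-- `A` and `B` are homomorphically equivalent. -/
def HomEquiv {σ : Type} {ar : σ → ℕ} {V W : Type}
    (A : Strc σ ar V) (B : Strc σ ar W) : Prop :=
  (∃ f, IsHom A B f) ∧ ∃ g, IsHom B A g

/-- `A` is a substructure of `B` (both structures on the same ambient carrier):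
the universe is a subset and each relation is contained in the corresponding one. -/
def Substruct {σ : Type} {ar : σ → ℕ} {V : Type} (A B : Strc σ ar V) : Prop :=
  A.univ ⊆ B.univ ∧ ∀ R, A.rel R ⊆ B.rel R

/-- `A` is a proper substructure of `B`. -/
def ProperSubstruct {σ : Type} {ar : σ → ℕ} {V : Type} (A B : Strc σ ar V) : Prop :=
  Substruct A B ∧ A ≠ B

/-- `A` is a core: there is no homomorphism from `A` to a proper substructure of `A`. -/
def IsCore {σ : Type} {ar : σ → ℕ} {V : Type} (A : Strc σ ar V) : Prop :=
  ∀ A' : Strc σ ar V, ProperSubstruct A' A → ¬ ∃ f, IsHom A A' f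

/-- `A'` is a core of `A`: a substructure of `A` which is a core and to which
`A` has a homomorphism. -/
def IsCoreOf {σ : Type} {ar : σ → ℕ} {V : Type} (A' A : Strc σ ar V) : Prop :=
  Substruct A' A ∧ (∃ f, IsHom A A' f) ∧ IsCore A'

/-- `A` and `B` are isomorphic: there is a homomorphism `f` from `A` to `B`
which is a bijection between the universes and whose inverse is a homomorphism. -/
def Isomorphic {σ : Type} {ar : σ → ℕ} {V W : Type}
    (A : Strc σ ar V) (B : Strc σ ar W) : Prop :=
  ∃ f g, IsHom A B f ∧ IsHom B A g ∧ Set.BijOn f A.univ B.univ ∧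
    Set.InvOn g f A.univ B.univ

/-- The Gaifman (primal) graph of a structure: vertices are the elements of the
universe, and two distinct elements are adjacent if they occur together in some
tuple of some relation. -/
def gaifman {σ : Type} {ar : σ → ℕ} {V : Type} (A : Strc σ ar V) :
    SimpleGraph ↥A.univ where
  Adj a b := a ≠ b ∧ ∃ R, ∃ t ∈ A.rel R, (a : V) ∈ Set.range t ∧ (b : V) ∈ Set.range t
  symm := by
    constructor
    rintro a b ⟨hab, R, t, ht, ha, hb⟩
    exact ⟨hab.symm, R, t, ht, hb, ha⟩
  loopless := by constructor; rintro a ⟨h, -⟩; exact h rfl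

/-- `G` has tree width at most `w`: there is a tree decomposition all of whose
bags have at most `w + 1` elements, i.e. a tree `T` with a bag assigned to each
node such that every vertex appears in a (nonempty) connected set of bags and
every edge is contained in some bag. -/
def TreewidthLE {X : Type} (G : SimpleGraph X) (w : ℕ) : Prop :=
  ∃ (ι : Type) (T : SimpleGraph ι) (bags : ι → Set X),
    T.IsTree ∧
    (∀ v : X, (T.induce {t | v ∈ bags t}).Connected) ∧
    (∀ a b : X, G.Adj a b → ∃ t, a ∈ bags t ∧ b ∈ bags t) ∧
    (∀ t, (bags t).ncard ≤ w + 1)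

/-! ### Auxiliary lemmas -/

lemma Strc.ext' {σ : Type} {ar : σ → ℕ} {V : Type} {A B : Strc σ ar V}
    (h1 : A.univ = B.univ) (h2 : A.rel = B.rel) : A = B := by
  cases A; cases B; simp_all

/-- The set of all tuples of all relations of a structure, bundled as a sigma set. -/
def relSet {σ : Type} {ar : σ → ℕ} {V : Type} (A : Strc σ ar V) :
    Set (Σ R : σ, Fin (ar R) → V) := {p | p.2 ∈ A.rel p.1}

/-- A size measure on structures: number of universe elements plus number of tuples. -/
noncomputable def size {σ : Type} {ar : σ → ℕ} {V : Type} (A : Strc σ ar V) : ℕ :=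
  A.univ.ncard + (relSet A).ncard

lemma size_lt {σ V : Type} [Finite σ] [Finite V] {ar : σ → ℕ}
    {A B : Strc σ ar V} (h : ProperSubstruct A B) : size A < size B := by
  obtain ⟨⟨hu, hr⟩, hne⟩ := h
  have hrs : relSet A ⊆ relSet B := fun p hp => hr p.1 hp
  have hcase : A.univ ⊂ B.univ ∨ relSet A ⊂ relSet B := by
    by_contra hc
    push_neg at hc
    have h1 : A.univ = B.univ := by
      rcases hc with ⟨h1, h2⟩
      exact hu.antisymm (fun x hx => by
        by_contra hxa
        exact h1 ⟨hu, fun hsub => hxa (hsub hx)⟩)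
    have h2 : relSet A = relSet B := by
      rcases hc with ⟨_, h2⟩
      exact hrs.antisymm (fun p hp => by
        by_contra hpa
        exact h2 ⟨hrs, fun hsub => hpa (hsub hp)⟩)
    apply hne
    apply Strc.ext' h1
    funext R
    ext t
    constructor
    · exact fun ht => hr R ht
    · intro ht
      have : (⟨R, t⟩ : Σ R : σ, Fin (ar R) → V) ∈ relSet A := h2 ▸ ht
      exact this
  rcases hcase with hlt | hlt
  · exact Nat.add_lt_add_of_lt_of_le (Set.ncard_lt_ncard hlt (Set.toFinite _))
      (Set.ncard_le_ncard hrs (Set.toFinite _))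
  · exact Nat.add_lt_add_of_le_of_lt (Set.ncard_le_ncard hu (Set.toFinite _))
      (Set.ncard_lt_ncard hlt (Set.toFinite _))

/-- Every finite structure has a core. -/
lemma exists_core {σ V : Type} [Finite σ] [Finite V] {ar : σ → ℕ}
    (A : Strc σ ar V) : ∃ A', IsCoreOf A' A := by
  set S : Set (Strc σ ar V) := {C | Substruct C A ∧ ∃ f, IsHom A C f} with hS
  have hAS : A ∈ S := ⟨⟨subset_rfl, fun R => subset_rfl⟩,
    id, Set.mapsTo_id _, fun R t ht => ht⟩
  have hM : (size '' S).Nonempty := ⟨size A, A, hAS, rfl⟩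
  obtain ⟨C, hCS, hCsz⟩ := Nat.sInf_mem hM
  refine ⟨C, hCS.1, hCS.2, ?_⟩
  intro C' hps ⟨f, hf⟩
  obtain ⟨g, hg⟩ := hCS.2
  have hC'S : C' ∈ S := by
    refine ⟨⟨hps.1.1.trans hCS.1.1, fun R => (hps.1.2 R).trans (hCS.1.2 R)⟩,
      f ∘ g, ?_, ?_⟩
    · exact fun x hx => hf.1 (hg.1 hx)
    · exact fun R t ht => hf.2 R _ (hg.2 R t ht)
  have : size C' < size C := size_lt hps
  have hle : sInf (size '' S) ≤ size C' := Nat.sInf_le ⟨C', hC'S, rfl⟩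
  omega

/-- Tree width transfers back along an injective homomorphism. -/
lemma tw_pullback {σ : Type} {ar : σ → ℕ} {V W : Type} [Finite W]
    (A : Strc σ ar V) (B : Strc σ ar W) (f : V → W)
    (hf : IsHom A B f) (hinj : Set.InjOn f A.univ) (w : ℕ)
    (h : TreewidthLE (gaifman B) w) : TreewidthLE (gaifman A) w := by
  obtain ⟨ι, T, bags, hT, hconn, hedge, hcard⟩ := h
  set F : ↥A.univ → ↥B.univ := fun v => ⟨f v, hf.1 v.2⟩ with hF
  have hFinj : Function.Injective F := fun v w hvw =>
    Subtype.ext (hinj v.2 w.2 (congrArg Subtype.val hvw))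
  refine ⟨ι, T, fun t => F ⁻¹' bags t, hT, ?_, ?_, ?_⟩
  · intro v
    exact hconn (F v)
  · rintro a b ⟨hab, R, t, ht, ⟨i, hi⟩, ⟨j, hj⟩⟩
    apply hedge (F a) (F b)
    refine ⟨fun hc => hab (hFinj hc), R, fun i => f (t i), hf.2 R t ht,
      ⟨i, congrArg f hi⟩, ⟨j, congrArg f hj⟩⟩
  · intro t
    refine le_trans ?_ (hcard t)
    exact Set.ncard_le_ncard_of_injOn F (fun v hv => hv) hFinj.injOn (Set.toFinite _)

/-- a structure is homomorphically equivalent to a (finite)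
structure of tree width at most `w` iff its core has tree width at most `w`
(tree width of a structure being the tree width of its Gaifman graph). -/
theorem homEquiv_treewidth_iff_core_treewidth {σ V : Type} [Finite σ] [Finite V]
    {ar : σ → ℕ} (𝔸 : Strc σ ar V) (w : ℕ) :
    (∃ (W : Type) (_ : Finite W) (𝔹 : Strc σ ar W),
        HomEquiv 𝔸 𝔹 ∧ TreewidthLE (gaifman 𝔹) w) ↔
      (∀ 𝔸' : Strc σ ar V, IsCoreOf 𝔸' 𝔸 → TreewidthLE (gaifman 𝔸') w) := by
  constructor
  · rintro ⟨W, _, B, ⟨⟨f, hf⟩, ⟨g, hg⟩⟩, htw⟩ A' ⟨hsub, ⟨h, hh⟩, hcore⟩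
    -- f is a hom from A' to B
    have hf' : IsHom A' B f :=
      ⟨fun x hx => hf.1 (hsub.1 hx), fun R t ht => hf.2 R t (hsub.2 R ht)⟩
    -- k = h ∘ g ∘ f is a hom from A' to A'
    set k : V → V := fun x => h (g (f x)) with hk
    have hkhom : IsHom A' A' k :=
      ⟨fun x hx => hh.1 (hg.1 (hf'.1 hx)), fun R t ht => hh.2 R _ (hg.2 R _ (hf'.2 R t ht))⟩
    -- the image structure of k
    set C : Strc σ ar V :=
      { univ := k '' A'.univ
        rel := fun R => {s | ∃ t ∈ A'.rel R, s = fun i => k (t i)}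
        mem_univ := by
          rintro R s ⟨t, ht, rfl⟩ i
          exact ⟨t i, A'.mem_univ R t ht i, rfl⟩ } with hC
    have hCsub : Substruct C A' := by
      constructor
      · rintro x ⟨y, hy, rfl⟩; exact hkhom.1 hy
      · rintro R s ⟨t, ht, rfl⟩; exact hkhom.2 R t ht
    have hChom : IsHom A' C k :=
      ⟨fun x hx => ⟨x, hx, rfl⟩, fun R t ht => ⟨t, ht, rfl⟩⟩
    have hCeq : C = A' := by
      by_contra hne
      exact hcore C ⟨hCsub, hne⟩ ⟨k, hChom⟩
    have hsurj : Set.SurjOn k A'.univ A'.univ := by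
      intro x hx
      have : x ∈ C.univ := hCeq ▸ hx
      exact this
    have hmaps : Set.MapsTo k A'.univ A'.univ := hkhom.1
    have hkinj : Set.InjOn k A'.univ :=
      (((Set.toFinite A'.univ).surjOn_iff_bijOn_of_mapsTo hmaps).mp hsurj).injOn
    have hfin : Set.InjOn f A'.univ := by
      intro a ha b hb hab
      apply hkinj ha hb
      simp only [hk, hab]
    exact tw_pullback A' B f hf' hfin w htw
  · intro hcw
    obtain ⟨A', hA'⟩ := exists_core 𝔸
    refine ⟨V, inferInstance, A', ⟨hA'.2.1, id, ?_, ?_⟩, hcw A' hA'⟩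
    · exact fun x hx => hA'.1.1 hx
    · exact fun R t ht => hA'.1.2 R ht
end

section
/- Let R^𝔹 ⊆ B^r be an r-ary relation on a finite set B with |B| ≥ 1. Then R^𝔹 has at most |R^𝔹| · (|B| − 1) · r bad prefixes. -/
/-- The set of bad prefixes of an `r`-ary relation `R` on `B`: tuples
`(b_1, …, b_s)` with `1 ≤ s ≤ r` such that (1) no tuple of `R` extends
`(b_1, …, b_s)`, and (2) some tuple of `R` extends `(b_1, …, b_{s-1})`. -/
def badPrefixes {B : Type} {r : ℕ} (R : Set (Fin r → B)) :
    Set ((s : ℕ) × (Fin s → B)) :=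
  {p | 1 ≤ p.1 ∧ p.1 ≤ r ∧
    (¬ ∃ c ∈ R, ∀ i : Fin r, (h : (i : ℕ) < p.1) → c i = p.2 ⟨(i : ℕ), h⟩) ∧
    (∃ c ∈ R, ∀ i : Fin r, (h : (i : ℕ) < p.1 - 1) →
      c i = p.2 ⟨(i : ℕ), lt_of_lt_of_le h (Nat.sub_le _ _)⟩)}

/-- an `r`-ary relation `R` on a finite set `B` with `|B| ≥ 1` has
at most `|R| · (|B| − 1) · r` bad prefixes. -/
theorem badPrefixes_card_le {B : Type} [Fintype B] (hB : 1 ≤ Fintype.card B)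
    {r : ℕ} (R : Set (Fin r → B)) :
    (badPrefixes R).ncard ≤ R.ncard * (Fintype.card B - 1) * r := by
  classical
  rcases Nat.eq_zero_or_pos r with hr | hr
  · subst hr
    have he : badPrefixes R = ∅ := by
      ext p
      simp only [badPrefixes, Set.mem_setOf_eq, Set.mem_empty_iff_false, iff_false]
      rintro ⟨h1, h2, -⟩
      omega
    simp [he]
  haveI : Nonempty (Fin r) := ⟨⟨0, hr⟩⟩
  haveI : Nonempty B := Fintype.card_pos_iff.mp hB
  set T : Set ((Fin r → B) × B × Fin r) :=
    {q | q.1 ∈ R ∧ q.2.1 ≠ q.1 q.2.2} with hT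
  set C : ((s : ℕ) × (Fin s → B)) → Prop := fun p =>
    (∃ c ∈ R, ∀ i : Fin r, (hi : (i : ℕ) < p.1 - 1) →
        c i = p.2 ⟨(i : ℕ), lt_of_lt_of_le hi (Nat.sub_le _ _)⟩) ∧ 1 ≤ p.1 ∧ p.1 ≤ r
      with hC
  set f : ((s : ℕ) × (Fin s → B)) → (Fin r → B) × B × Fin r := fun p =>
    if h : C p
    then (h.1.choose, p.2 ⟨p.1 - 1, Nat.sub_lt h.2.1 one_pos⟩,
      ⟨p.1 - 1, lt_of_lt_of_le (Nat.sub_lt h.2.1 one_pos) h.2.2⟩)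
    else Classical.arbitrary _ with hf
  have hCmem : ∀ p ∈ badPrefixes R, C p := by
    rintro p ⟨h1, h2, h3, h4⟩
    exact ⟨h4, h1, h2⟩
  have hle : (badPrefixes R).ncard ≤ T.ncard := by
    apply Set.ncard_le_ncard_of_injOn f
    · -- maps into T
      intro p hp
      obtain ⟨h1, h2, h3, h4⟩ := hp
      have hc : C p := ⟨h4, h1, h2⟩
      simp only [hf, dif_pos hc]
      refine ⟨hc.1.choose_spec.1, ?_⟩
      intro heq
      apply h3
      refine ⟨hc.1.choose, hc.1.choose_spec.1, ?_⟩
      intro i hi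
      rcases Nat.lt_or_ge (i : ℕ) (p.1 - 1) with hlt | hge
      · exact hc.1.choose_spec.2 i hlt
      · have hiv : (i : ℕ) = p.1 - 1 := by omega
        have hi1 : (i : Fin r) = ⟨p.1 - 1, lt_of_lt_of_le (Nat.sub_lt hc.2.1 one_pos) hc.2.2⟩ :=
          Fin.ext hiv
        have hi2 : (⟨(i : ℕ), hi⟩ : Fin p.1) = ⟨p.1 - 1, Nat.sub_lt hc.2.1 one_pos⟩ :=
          Fin.ext hiv
        have heq' : p.2 ⟨p.1 - 1, Nat.sub_lt hc.2.1 one_pos⟩ =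
            hc.1.choose ⟨p.1 - 1, lt_of_lt_of_le (Nat.sub_lt hc.2.1 one_pos) hc.2.2⟩ := heq
        calc hc.1.choose i
            = hc.1.choose ⟨p.1 - 1, lt_of_lt_of_le (Nat.sub_lt hc.2.1 one_pos) hc.2.2⟩ := by
              rw [hi1]
          _ = p.2 ⟨p.1 - 1, Nat.sub_lt hc.2.1 one_pos⟩ := heq'.symm
          _ = p.2 ⟨(i : ℕ), hi⟩ := by rw [hi2]
    · -- injective on badPrefixes
      intro p hp q hq heq
      have hcp : C p := hCmem p hp
      have hcq : C q := hCmem q hq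
      simp only [hf, dif_pos hcp, dif_pos hcq, Prod.mk.injEq] at heq
      obtain ⟨hc, hb, hs⟩ := heq
      have hs' : p.1 - 1 = q.1 - 1 := congrArg Fin.val hs
      have hseq : p.1 = q.1 := by
        have := hcp.2.1; have := hcq.2.1; omega
      obtain ⟨s, pf⟩ := p
      obtain ⟨s', qf⟩ := q
      dsimp at hseq
      subst hseq
      have hfun : pf = qf := by
        funext i
        rcases Nat.lt_or_ge (i : ℕ) (s - 1) with hlt | hge
        · have hir : (i : ℕ) < r := lt_of_lt_of_le i.isLt hcp.2.2
          have e1 := hcp.1.choose_spec.2 ⟨(i : ℕ), hir⟩ hlt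
          have e2 := hcq.1.choose_spec.2 ⟨(i : ℕ), hir⟩ hlt
          calc pf i = hcp.1.choose ⟨(i : ℕ), hir⟩ := e1.symm
            _ = hcq.1.choose ⟨(i : ℕ), hir⟩ := by rw [hc]
            _ = qf i := e2
        · have hiv : (i : ℕ) = s - 1 := by
            have := i.isLt; have := hcp.2.1; omega
          have hi1 : i = (⟨s - 1, Nat.sub_lt hcp.2.1 one_pos⟩ : Fin s) := Fin.ext hiv
          rw [hi1]
          exact hb
      exact congrArg (Sigma.mk s) hfun
  refine hle.trans ?_
  -- count T
  haveI : Fintype R := R.toFinite.fintype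
  have key : T.ncard = R.ncard * (Fintype.card B - 1) * r := by
    have e : T ≃ (c : R) × (i : Fin r) × {b : B // b ≠ (c : Fin r → B) i} :=
      { toFun := fun q => ⟨⟨q.1.1, q.2.1⟩, q.1.2.2, ⟨q.1.2.1, q.2.2⟩⟩
        invFun := fun x => ⟨(x.1.1, x.2.2.1, x.2.1), x.1.2, x.2.2.2⟩
        left_inv := fun q => rfl
        right_inv := fun x => rfl }
    have h1 : T.ncard = Nat.card T := (Nat.card_coe_set_eq T).symm
    rw [h1, Nat.card_congr e, Nat.card_eq_fintype_card]
    have hsub : ∀ (c : Fin r → B) (i : Fin r),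
        Fintype.card {b : B // b ≠ c i} = Fintype.card B - 1 := by
      intro c i
      have := Fintype.card_subtype_compl (fun b : B => b = c i)
      simp only [Fintype.card_subtype_eq] at this; exact this
      
    rw [Fintype.card_sigma]
    have : ∀ c : R, Fintype.card ((i : Fin r) × {b : B // b ≠ (c : Fin r → B) i}) =
        (Fintype.card B - 1) * r := by
      intro c
      rw [Fintype.card_sigma]
      simp [hsub]
      ring
    simp only [this, Finset.sum_const, smul_eq_mul, Finset.card_univ]
    rw [Set.ncard_eq_toFinset_card']
    simp [Set.toFinset_card]
    ring
  rw [key]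
end

section
/- Let 𝔸 be a relational structure with a sequence of subsets A = A_0 ⊃ A_1 ⊃ ⋯ ⊃ A_n ≠ ∅ and homomorphisms φ_i from 𝔸_{i−1} := 𝔸[A_{i−1}] to 𝔸_i := 𝔸[A_i] with φ_i(A_{i−1}) = A_i for 1 ≤ i ≤ n, and let 𝔹 be a structure over the same vocabulary. Then every elementary homomorphism from 𝔸_i to 𝔹 with i < n has exactly one parent, and no homomorphism from 𝔸_n to 𝔹 has a parent. -/
/-- The induced substructure `A[X]` (kept on the same ambient carrier):
its universe is `X` and its relations consist of those tuples of `A` all of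
whose entries lie in `X`. -/
def Strc.induce {σ : Type} {ar : σ → ℕ} {V : Type} (A : Strc σ ar V) (X : Set V) :
    Strc σ ar V where
  univ := X
  rel := fun R => {t | t ∈ A.rel R ∧ ∀ i, t i ∈ X}
  mem_univ := fun _ _ ht i => ht.2 i

/-- `chain φ t = φ_t ∘ ⋯ ∘ φ_1` (and `chain φ 0 = id`). -/
def chain {V : Type} (φ : ℕ → V → V) : ℕ → V → V
  | 0 => id
  | t + 1 => φ (t + 1) ∘ chain φ t

/-- `chainSeg φ a m = φ_{a+m} ∘ ⋯ ∘ φ_{a+1}` (and `chainSeg φ a 0 = id`). -/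
def chainSeg {V : Type} (φ : ℕ → V → V) (a : ℕ) : ℕ → V → V
  | 0 => id
  | m + 1 => φ (a + m + 1) ∘ chainSeg φ a m

/-- A homomorphism `ψ` from `𝔸_t = 𝔸[A t]` to `𝔹` is reducible if `t < n` and
it can be written as `ψ = ψ' ∘ φ_{t+1}` (on `A t`) for some homomorphism `ψ'`
from `𝔸_{t+1}` to `𝔹`. -/
def Reducible {σ : Type} {ar : σ → ℕ} {V W : Type}
    (𝔸 : Strc σ ar V) (𝔹 : Strc σ ar W) (A : ℕ → Set V) (φ : ℕ → V → V) (n : ℕ)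
    (t : ℕ) (ψ : V → W) : Prop :=
  t < n ∧ ∃ ψ' : V → W, IsHom (𝔸.induce (A (t + 1))) 𝔹 ψ' ∧
    Set.EqOn ψ (ψ' ∘ φ (t + 1)) (A t)

/-- A homomorphism `ψ` from `𝔸_t` to `𝔹` is elementary if it is not reducible. -/
def Elementary {σ : Type} {ar : σ → ℕ} {V W : Type}
    (𝔸 : Strc σ ar V) (𝔹 : Strc σ ar W) (A : ℕ → Set V) (φ : ℕ → V → V) (n : ℕ)
    (t : ℕ) (ψ : V → W) : Prop :=
  ¬ Reducible 𝔸 𝔹 A φ n t ψ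

/-- `f` (a homomorphism from `𝔸` to `𝔹`) can be written as
`f = ψ ∘ φ_t ∘ ⋯ ∘ φ_1` for some homomorphism `ψ` from `𝔸_t` to `𝔹`
(equality as maps on the universe of `𝔸`). -/
def WritableAt {σ : Type} {ar : σ → ℕ} {V W : Type}
    (𝔸 : Strc σ ar V) (𝔹 : Strc σ ar W) (A : ℕ → Set V) (φ : ℕ → V → V)
    (t : ℕ) (f : V → W) : Prop :=
  ∃ ψ : V → W, IsHom (𝔸.induce (A t)) 𝔹 ψ ∧ Set.EqOn f (ψ ∘ chain φ t) 𝔸.univ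

/-- The index of `f` is exactly `t`: `t` is the largest `s ≤ n` such that `f`
can be written as `ψ ∘ φ_s ∘ ⋯ ∘ φ_1`. -/
def HasIndex {σ : Type} {ar : σ → ℕ} {V W : Type}
    (𝔸 : Strc σ ar V) (𝔹 : Strc σ ar W) (A : ℕ → Set V) (φ : ℕ → V → V) (n : ℕ)
    (f : V → W) (t : ℕ) : Prop :=
  t ≤ n ∧ WritableAt 𝔸 𝔹 A φ t f ∧
    ∀ s ≤ n, WritableAt 𝔸 𝔹 A φ s f → s ≤ t

/-- `ψ`, an elementary homomorphism from `𝔸_j` to `𝔹` with `j > i`, is the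
parent of the (elementary) homomorphism `f` from `𝔸_i` to `𝔹` if the
restriction of `f` to `A (i+1)` can be written as `ψ ∘ φ_j ∘ ⋯ ∘ φ_{i+2}`. -/
def IsParent {σ : Type} {ar : σ → ℕ} {V W : Type}
    (𝔸 : Strc σ ar V) (𝔹 : Strc σ ar W) (A : ℕ → Set V) (φ : ℕ → V → V) (n : ℕ)
    (j : ℕ) (ψ : V → W) (i : ℕ) (f : V → W) : Prop :=
  i < j ∧ j ≤ n ∧ IsHom (𝔸.induce (A j)) 𝔹 ψ ∧ Elementary 𝔸 𝔹 A φ n j ψ ∧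
    Set.EqOn f (ψ ∘ chainSeg φ (i + 1) (j - (i + 1))) (A (i + 1))

lemma isHom_comp {σ : Type} {ar : σ → ℕ} {U V W : Type}
    {A : Strc σ ar U} {B : Strc σ ar V} {C : Strc σ ar W} {f : U → V} {g : V → W}
    (hf : IsHom A B f) (hg : IsHom B C g) : IsHom A C (g ∘ f) :=
  ⟨hg.1.comp hf.1, fun R t ht => hg.2 R _ (hf.2 R t ht)⟩

/-- every elementary homomorphism from `𝔸_i` to `𝔹` with `i < n`
has exactly one parent (unique as a homomorphism, i.e. up to its values on
`A j`), and no homomorphism from `𝔸_n` to `𝔹` has a parent. -/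
theorem parent_unique {σ V W : Type} [Finite σ] [Finite V] [Finite W]
    {ar : σ → ℕ} (𝔸 : Strc σ ar V) (𝔹 : Strc σ ar W)
    (n : ℕ) (A : ℕ → Set V) (φ : ℕ → V → V)
    (hA0 : A 0 = 𝔸.univ)
    (hdec : ∀ i < n, A (i + 1) ⊂ A i)
    (hne : (A n).Nonempty)
    (hhom : ∀ i < n, IsHom (𝔸.induce (A i)) (𝔸.induce (A (i + 1))) (φ (i + 1)))
    (himg : ∀ i < n, φ (i + 1) '' A i = A (i + 1)) :
    (∀ i < n, ∀ f : V → W, IsHom (𝔸.induce (A i)) 𝔹 f →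
        Elementary 𝔸 𝔹 A φ n i f →
        (∃ j ψ, IsParent 𝔸 𝔹 A φ n j ψ i f) ∧
        (∀ j₁ ψ₁ j₂ ψ₂, IsParent 𝔸 𝔹 A φ n j₁ ψ₁ i f →
          IsParent 𝔸 𝔹 A φ n j₂ ψ₂ i f → j₁ = j₂ ∧ Set.EqOn ψ₁ ψ₂ (A j₁))) ∧
    (∀ f : V → W, IsHom (𝔸.induce (A n)) 𝔹 f →
        ¬ ∃ j ψ, IsParent 𝔸 𝔹 A φ n j ψ n f) := by
  classical
  -- basic monotonicity of the chain of subsets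
  have hsub : ∀ i j, i ≤ j → j ≤ n → A j ⊆ A i := by
    intro i j hij hjn
    have key : ∀ k, i + k ≤ n → A (i + k) ⊆ A i := by
      intro k
      induction k with
      | zero => intro _; exact le_refl _
      | succ k ih =>
        intro h
        exact ((hdec (i + k) (by omega)).subset).trans (ih (by omega))
    have := key (j - i) (by omega)
    rwa [show i + (j - i) = j by omega] at this
  -- chainSeg maps A a into A (a+m)
  have hseg_mem : ∀ a m, a + m ≤ n → ∀ x ∈ A a, chainSeg φ a m x ∈ A (a + m) := by
    intro a m
    induction m with
    | zero => intro _ x hx; exact hx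
    | succ m ih =>
      intro h x hx
      have hy : chainSeg φ a m x ∈ A (a + m) := ih (by omega) x hx
      have := himg (a + m) (by omega)
      have : φ (a + m + 1) (chainSeg φ a m x) ∈ φ (a + m + 1) '' A (a + m) :=
        ⟨_, hy, rfl⟩
      rwa [himg (a + m) (by omega)] at this
  -- chainSeg is surjective from A a onto A (a+m)
  have hseg_surj : ∀ a m, a + m ≤ n → ∀ y ∈ A (a + m), ∃ x ∈ A a, chainSeg φ a m x = y := by
    intro a m
    induction m with
    | zero => intro _ y hy; exact ⟨y, hy, rfl⟩
    | succ m ih =>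
      intro h y hy
      have : y ∈ φ (a + m + 1) '' A (a + m) := by
        rw [himg (a + m) (by omega)]; exact hy
      obtain ⟨z, hz, hzy⟩ := this
      obtain ⟨x, hx, hxz⟩ := ih (by omega) z hz
      exact ⟨x, hx, by simp [chainSeg, hxz, hzy]⟩
  -- chainSeg is a homomorphism
  have hseg_hom : ∀ a m, a + m ≤ n →
      IsHom (𝔸.induce (A a)) (𝔸.induce (A (a + m))) (chainSeg φ a m) := by
    intro a m
    induction m with
    | zero => intro _; exact ⟨fun x hx => hx, fun R t ht => ht⟩
    | succ m ih =>
      intro h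
      exact isHom_comp (ih (by omega)) (hhom (a + m) (by omega))
  -- splitting of chainSeg
  have hseg_split : ∀ a m k x,
      chainSeg φ a (m + k) x = chainSeg φ (a + m) k (chainSeg φ a m x) := by
    intro a m k x
    induction k with
    | zero => rfl
    | succ k ih =>
      show chainSeg φ a (m + k + 1) x = _
      have h1 : chainSeg φ a (m + k + 1) x
          = φ (a + (m + k) + 1) (chainSeg φ a (m + k) x) := rfl
      rw [h1, ih]
      show _ = φ (a + m + k + 1) (chainSeg φ (a + m) k (chainSeg φ a m x))
      rw [show a + (m + k) + 1 = a + m + k + 1 by omega]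
  constructor
  · intro i hi f hf hel
    -- restriction of a hom to a smaller universe is a hom
    have hrestr : ∀ j₁ j₂, j₁ ≤ j₂ → j₂ ≤ n → ∀ g : V → W,
        IsHom (𝔸.induce (A j₁)) 𝔹 g → IsHom (𝔸.induce (A j₂)) 𝔹 g := by
      intro j₁ j₂ h12 h2n g hg
      refine ⟨fun x hx => hg.1 (hsub j₁ j₂ h12 h2n hx), fun R t ht => ?_⟩
      exact hg.2 R t ⟨ht.1, fun k => hsub j₁ j₂ h12 h2n (ht.2 k)⟩
    set P : ℕ → Prop := fun j => i + 1 ≤ j ∧ ∃ ψ, IsHom (𝔸.induce (A j)) 𝔹 ψ ∧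
      Set.EqOn f (ψ ∘ chainSeg φ (i + 1) (j - (i + 1))) (A (i + 1)) with hP
    have hPi1 : P (i + 1) := by
      refine ⟨le_refl _, f, hrestr i (i + 1) (by omega) (by omega) f hf, ?_⟩
      intro x hx
      simp [chainSeg]
    set j := Nat.findGreatest P n with hj
    have hPj : P j := Nat.findGreatest_spec (show i + 1 ≤ n by omega) hPi1
    have hmax : ∀ k, k ≤ n → P k → k ≤ j := fun k hk hPk => Nat.le_findGreatest hk hPk
    have hjn : j ≤ n := Nat.findGreatest_le n
    obtain ⟨hij, ψ, hψ, heq⟩ := hPj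
    -- ψ is elementary by maximality
    have helem : Elementary 𝔸 𝔹 A φ n j ψ := by
      rintro ⟨hjlt, ψ', hψ', heq'⟩
      have hPj1 : P (j + 1) := by
        refine ⟨by omega, ψ', hψ', ?_⟩
        intro x hx
        have hmem : chainSeg φ (i + 1) (j - (i + 1)) x ∈ A j := by
          have := hseg_mem (i + 1) (j - (i + 1)) (by omega) x hx
          rwa [show i + 1 + (j - (i + 1)) = j by omega] at this
        have h1 : f x = ψ (chainSeg φ (i + 1) (j - (i + 1)) x) := heq hx
        have h2 : ψ (chainSeg φ (i + 1) (j - (i + 1)) x)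
            = ψ' (φ (j + 1) (chainSeg φ (i + 1) (j - (i + 1)) x)) := heq' hmem
        have h3 : chainSeg φ (i + 1) (j + 1 - (i + 1)) x
            = φ (j + 1) (chainSeg φ (i + 1) (j - (i + 1)) x) := by
          rw [show j + 1 - (i + 1) = (j - (i + 1)) + 1 by omega]
          show φ (i + 1 + (j - (i + 1)) + 1) (chainSeg φ (i + 1) (j - (i + 1)) x) = _
          rw [show i + 1 + (j - (i + 1)) + 1 = j + 1 by omega]
        simp only [Function.comp_apply, h3]
        rw [h1, h2]
      have := hmax (j + 1) (by omega) hPj1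
      omega
    refine ⟨⟨j, ψ, by omega, hjn, hψ, helem, heq⟩, ?_⟩
    -- uniqueness
    have key : ∀ j₁ ψ₁ j₂ ψ₂, IsParent 𝔸 𝔹 A φ n j₁ ψ₁ i f →
        IsParent 𝔸 𝔹 A φ n j₂ ψ₂ i f → j₁ < j₂ → False := by
      rintro j₁ ψ₁ j₂ ψ₂ ⟨hij1, hj1n, hhom1, hel1, heq1⟩ ⟨hij2, hj2n, hhom2, hel2, heq2⟩ hlt
      apply hel1
      refine ⟨by omega, ψ₂ ∘ chainSeg φ (j₁ + 1) (j₂ - (j₁ + 1)), ?_, ?_⟩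
      · have h := hseg_hom (j₁ + 1) (j₂ - (j₁ + 1)) (by omega)
        rw [show j₁ + 1 + (j₂ - (j₁ + 1)) = j₂ by omega] at h
        exact isHom_comp h hhom2
      · intro y hy
        obtain ⟨x, hx, hxy⟩ := by
          have := hseg_surj (i + 1) (j₁ - (i + 1)) (by omega)
          rw [show i + 1 + (j₁ - (i + 1)) = j₁ by omega] at this
          exact this y hy
        have h1 : ψ₁ y = f x := by
          have := heq1 hx
          simp only [Function.comp_apply, hxy] at this
          exact this.symm
        have h2 : f x = ψ₂ (chainSeg φ (i + 1) (j₂ - (i + 1)) x) := heq2 hx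
        have h3 : chainSeg φ (i + 1) (j₂ - (i + 1)) x = chainSeg φ j₁ (j₂ - j₁) y := by
          have := hseg_split (i + 1) (j₁ - (i + 1)) (j₂ - j₁) x
          rw [show j₁ - (i + 1) + (j₂ - j₁) = j₂ - (i + 1) by omega,
            show i + 1 + (j₁ - (i + 1)) = j₁ by omega, hxy] at this
          exact this
        have h4 : chainSeg φ j₁ (j₂ - j₁) y
            = chainSeg φ (j₁ + 1) (j₂ - (j₁ + 1)) (φ (j₁ + 1) y) := by
          have := hseg_split j₁ 1 (j₂ - (j₁ + 1)) y
          rw [show 1 + (j₂ - (j₁ + 1)) = j₂ - j₁ by omega] at this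
          rw [this]
          simp [chainSeg]
        simp only [Function.comp_apply]
        rw [h1, h2, h3, h4]
    intro j₁ ψ₁ j₂ ψ₂ h₁ h₂
    have hjj : j₁ = j₂ := by
      rcases lt_trichotomy j₁ j₂ with h | h | h
      · exact absurd (key j₁ ψ₁ j₂ ψ₂ h₁ h₂ h) id
      · exact h
      · exact absurd (key j₂ ψ₂ j₁ ψ₁ h₂ h₁ h) id
    refine ⟨hjj, ?_⟩
    obtain ⟨hij1, hj1n, hhom1, hel1, heq1⟩ := h₁
    obtain ⟨hij2, hj2n, hhom2, hel2, heq2⟩ := h₂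
    intro y hy
    obtain ⟨x, hx, hxy⟩ := by
      have := hseg_surj (i + 1) (j₁ - (i + 1)) (by omega)
      rw [show i + 1 + (j₁ - (i + 1)) = j₁ by omega] at this
      exact this y hy
    have h1 := heq1 hx
    have h2 := heq2 hx
    subst hjj
    simp only [Function.comp_apply, hxy] at h1 h2
    rw [← h1, ← h2]
  · rintro f hf ⟨j, ψ, hp⟩
    have h1 : n < j := hp.1
    have h2 : j ≤ n := hp.2.1
    omega
end
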